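/- Let p and q be distinct primes, both different from 2. Then the ring ℤ_(p) ∩ ℤ_(q) (a subring of ℚ) is very clean, but it is not strongly clean. -/

import Mathlib

/-- An element `a` of a ring is *very clean* if there is an idempotent `e` commuting with `a`
such that `a - e` or `a + e` is a unit. -/
def IsVeryClean {R : Type*} [Ring R] (a : R) : Prop :=
  ∃ e : R, IsIdempotentElem e ∧ a * e = e * a ∧ (IsUnit (a - e) ∨ IsUnit (a + e))

/-- A ring is *very clean* if every element is very clean. -/
def VeryCleanRing (R : Type*) [Ring R] : Prop :=
  ∀ a : R, IsVeryClean a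

/-- An element `a` of a ring is *strongly clean* if there is an idempotent `e` commuting with `a`
such that `a - e` is a unit. -/
def IsStronglyClean {R : Type*} [Ring R] (a : R) : Prop :=
  ∃ e : R, IsIdempotentElem e ∧ a * e = e * a ∧ IsUnit (a - e)

/-- A ring is *strongly clean* if every element is strongly clean. -/
def StronglyCleanRing (R : Type*) [Ring R] : Prop :=
  ∀ a : R, IsStronglyClean a

/-- For a prime `p`, the localization `ℤ_(p)` of `ℤ` at `p`, realized as the subring of `ℚ`
consisting of all fractions `m / n` with `m, n ∈ ℤ` and `p ∤ n`. -/
def ZLoc (p : ℕ) (hp : p.Prime) : Subring ℚ where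
  carrier := {x : ℚ | ∃ m n : ℤ, ¬ ((p : ℤ) ∣ n) ∧ x = m / n}
  zero_mem' := ⟨0, 1, fun h => hp.one_lt.ne' (Nat.dvd_one.mp (by exact_mod_cast h)), by simp⟩
  one_mem' := ⟨1, 1, fun h => hp.one_lt.ne' (Nat.dvd_one.mp (by exact_mod_cast h)), by simp⟩
  add_mem' := by
    rintro x y ⟨m, n, hn, rfl⟩ ⟨m', n', hn', rfl⟩
    refine ⟨m * n' + m' * n, n * n', fun h => ?_, ?_⟩
    · rcases (Int.Prime.dvd_mul' (by exact_mod_cast hp) h) with h | h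
      exacts [hn h, hn' h]
    · have h0 : (n : ℚ) ≠ 0 := Int.cast_ne_zero.mpr (fun h0 => hn (h0 ▸ dvd_zero _))
      have h0' : (n' : ℚ) ≠ 0 := Int.cast_ne_zero.mpr (fun h0 => hn' (h0 ▸ dvd_zero _))
      field_simp
      push_cast
      ring
  neg_mem' := by
    rintro x ⟨m, n, hn, rfl⟩
    exact ⟨-m, n, hn, by push_cast; ring⟩
  mul_mem' := by
    rintro x y ⟨m, n, hn, rfl⟩ ⟨m', n', hn', rfl⟩
    refine ⟨m * m', n * n', fun h => ?_, ?_⟩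
    · rcases (Int.Prime.dvd_mul' (by exact_mod_cast hp) h) with h | h
      exacts [hn h, hn' h]
    · push_cast
      rw [div_mul_div_comm]


-- Auxiliary lemmas

lemma ZLoc_not_dvd_den {p : ℕ} (hp : p.Prime) {x : ℚ} (hx : x ∈ ZLoc p hp) :
    ¬ (p : ℤ) ∣ (x.den : ℤ) := by
  obtain ⟨m, n, hn, rfl⟩ := hx
  intro h
  refine hn (h.trans ?_)
  rw [← Rat.divInt_eq_div]; exact Rat.den_dvd m n

lemma ZLoc_isUnit_of_rep {p q : ℕ} {hp : p.Prime} {hq : q.Prime}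
    (x : ↥(ZLoc p hp ⊓ ZLoc q hq)) (m n : ℤ)
    (hx : (x : ℚ) = m / n) (hn : n ≠ 0) (hpm : ¬ (p:ℤ) ∣ m) (hqm : ¬ (q:ℤ) ∣ m) :
    IsUnit x := by
  have hm : (m : ℚ) ≠ 0 := Int.cast_ne_zero.mpr (fun h => hpm (h ▸ dvd_zero _))
  have hn' : (n : ℚ) ≠ 0 := Int.cast_ne_zero.mpr hn
  have hy : ((n : ℚ) / (m : ℚ)) ∈ ZLoc p hp ⊓ ZLoc q hq :=
    ⟨⟨n, m, hpm, rfl⟩, ⟨n, m, hqm, rfl⟩⟩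
  refine isUnit_iff_exists_inv.mpr ⟨⟨_, hy⟩, ?_⟩
  ext
  push_cast [hx]
  field_simp

lemma ZLoc_not_isUnit_left {p q : ℕ} {hp : p.Prime} {hq : q.Prime}
    (x : ↥(ZLoc p hp ⊓ ZLoc q hq)) (k : ℤ)
    (hx : (x : ℚ) = k) (hk : (p:ℤ) ∣ k) : ¬ IsUnit x := by
  intro h
  obtain ⟨y, hy⟩ := isUnit_iff_exists_inv.mp h
  obtain ⟨m, n, hn, hyv⟩ := y.2.1
  have hxy : (x : ℚ) * (y : ℚ) = 1 := by exact_mod_cast congrArg (Subtype.val) hy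
  have hn' : (n : ℚ) ≠ 0 := Int.cast_ne_zero.mpr (fun h0 => hn (h0 ▸ dvd_zero _))
  have : (k : ℚ) * m = n := by
    rw [hx, hyv] at hxy
    field_simp at hxy
    linarith [hxy]
  have hint : k * m = n := by exact_mod_cast this
  exact hn (hint ▸ Dvd.dvd.mul_right hk m)

lemma ZLoc_not_isUnit_right {p q : ℕ} {hp : p.Prime} {hq : q.Prime}
    (x : ↥(ZLoc p hp ⊓ ZLoc q hq)) (k : ℤ)
    (hx : (x : ℚ) = k) (hk : (q:ℤ) ∣ k) : ¬ IsUnit x := by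
  intro h
  obtain ⟨y, hy⟩ := isUnit_iff_exists_inv.mp h
  obtain ⟨m, n, hn, hyv⟩ := y.2.2
  have hxy : (x : ℚ) * (y : ℚ) = 1 := by exact_mod_cast congrArg (Subtype.val) hy
  have hn' : (n : ℚ) ≠ 0 := Int.cast_ne_zero.mpr (fun h0 => hn (h0 ▸ dvd_zero _))
  have : (k : ℚ) * m = n := by
    rw [hx, hyv] at hxy
    field_simp at hxy
    linarith [hxy]
  have hint : k * m = n := by exact_mod_cast this
  exact hn (hint ▸ Dvd.dvd.mul_right hk m)
theorem ZLoc_inter_very_clean_not_strongly_clean (p q : ℕ) (hp : p.Prime) (hq : q.Prime)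
    (hpq : p ≠ q) (hp2 : p ≠ 2) (hq2 : q ≠ 2) :
    VeryCleanRing ↥(ZLoc p hp ⊓ ZLoc q hq) ∧
    ¬ StronglyCleanRing ↥(ZLoc p hp ⊓ ZLoc q hq) := by
  have hp2' : ¬ (p:ℤ) ∣ 2 := by
    intro h
    exact hp2 ((Nat.prime_dvd_prime_iff_eq hp Nat.prime_two).mp (by exact_mod_cast h))
  have hq2' : ¬ (q:ℤ) ∣ 2 := by
    intro h
    exact hq2 ((Nat.prime_dvd_prime_iff_eq hq Nat.prime_two).mp (by exact_mod_cast h))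
  constructor
  · -- Very clean
    intro x
    have hpd : ¬ (p:ℤ) ∣ ((x : ℚ).den : ℤ) := ZLoc_not_dvd_den hp x.2.1
    have hqd : ¬ (q:ℤ) ∣ ((x : ℚ).den : ℤ) := ZLoc_not_dvd_den hq x.2.2
    set N : ℤ := (x : ℚ).num with hN
    set d : ℤ := ((x : ℚ).den : ℤ) with hd
    have hd0 : d ≠ 0 := fun h => hpd (h ▸ dvd_zero _)
    have hrep : (x : ℚ) = N / d := (Rat.num_div_den _).symm
    have key : (¬(p:ℤ) ∣ N ∧ ¬(q:ℤ) ∣ N) ∨ (¬(p:ℤ) ∣ (N - d) ∧ ¬(q:ℤ) ∣ (N - d)) ∨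
        (¬(p:ℤ) ∣ (N + d) ∧ ¬(q:ℤ) ∣ (N + d)) := by
      by_contra hcon
      push_neg at hcon
      obtain ⟨h1, h2, h3⟩ := hcon
      have hA : (p:ℤ) ∣ N ∨ (q:ℤ) ∣ N := by
        by_cases hc : (p:ℤ) ∣ N
        exacts [Or.inl hc, Or.inr (h1 hc)]
      have hB : (p:ℤ) ∣ (N - d) ∨ (q:ℤ) ∣ (N - d) := by
        by_cases hc : (p:ℤ) ∣ (N - d)
        exacts [Or.inl hc, Or.inr (h2 hc)]
      have hC : (p:ℤ) ∣ (N + d) ∨ (q:ℤ) ∣ (N + d) := by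
        by_cases hc : (p:ℤ) ∣ (N + d)
        exacts [Or.inl hc, Or.inr (h3 hc)]
      have e1 : N - (N - d) = d := by ring
      have e2 : (N + d) - N = d := by ring
      have e3 : (N + d) - (N - d) = 2 * d := by ring
      have hpnot2d : ¬ (p:ℤ) ∣ 2 * d := by
        intro h
        rcases Int.Prime.dvd_mul' (by exact_mod_cast hp) h with h | h
        exacts [hp2' h, hpd h]
      have hqnot2d : ¬ (q:ℤ) ∣ 2 * d := by
        intro h
        rcases Int.Prime.dvd_mul' (by exact_mod_cast hq) h with h | h
        exacts [hq2' h, hqd h]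
      rcases hA with hA | hA <;> rcases hB with hB | hB <;> rcases hC with hC | hC
      · exact hpd (e1 ▸ dvd_sub hA hB)
      · exact hpd (e1 ▸ dvd_sub hA hB)
      · exact hpd (e2 ▸ dvd_sub hC hA)
      · exact hqnot2d (e3 ▸ dvd_sub hC hB)
      · exact hpnot2d (e3 ▸ dvd_sub hC hB)
      · exact hqd (e2 ▸ dvd_sub hC hA)
      · exact hqd (e1 ▸ dvd_sub hA hB)
      · exact hqd (e1 ▸ dvd_sub hA hB)
    rcases key with ⟨h1, h2⟩ | ⟨h1, h2⟩ | ⟨h1, h2⟩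
    · refine ⟨0, by simp [IsIdempotentElem], by ring, Or.inl ?_⟩
      rw [sub_zero]
      exact ZLoc_isUnit_of_rep x N d hrep hd0 h1 h2
    · refine ⟨1, by simp [IsIdempotentElem], by ring, Or.inl ?_⟩
      refine ZLoc_isUnit_of_rep (x - 1) (N - d) d ?_ hd0 h1 h2
      have hdq : (d : ℚ) ≠ 0 := Int.cast_ne_zero.mpr hd0
      push_cast
      rw [hrep]
      field_simp
    · refine ⟨1, by simp [IsIdempotentElem], by ring, Or.inr ?_⟩
      refine ZLoc_isUnit_of_rep (x + 1) (N + d) d ?_ hd0 h1 h2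
      have hdq : (d : ℚ) ≠ 0 := Int.cast_ne_zero.mpr hd0
      push_cast
      rw [hrep]
      field_simp
  · -- Not strongly clean
    intro hSC
    have hcop : IsCoprime (p : ℤ) (q : ℤ) :=
      Nat.isCoprime_iff_coprime.mpr ((Nat.coprime_primes hp hq).mpr hpq)
    obtain ⟨u, v, huv⟩ := hcop
    set a : ℤ := u * p with ha
    have hpa : (p:ℤ) ∣ a := ⟨u, mul_comm u _⟩
    have hqa : (q:ℤ) ∣ (a - 1) := by
      refine ⟨-v, ?_⟩
      rw [ha]
      linarith [huv]
    obtain ⟨e, he, _, hu⟩ := hSC ((a : ℤ) : ↥(ZLoc p hp ⊓ ZLoc q hq))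
    have hcast : (((a : ℤ) : ↥(ZLoc p hp ⊓ ZLoc q hq)) : ℚ) = (a : ℚ) := by push_cast; ring
    have hev : (e : ℚ) * (e : ℚ) = (e : ℚ) := by exact_mod_cast congrArg Subtype.val he
    have he01 : e = 0 ∨ e = 1 := by
      have h01 : (e : ℚ) = 0 ∨ (e : ℚ) = 1 := by
        have := mul_eq_zero.mp (by linear_combination hev : (e:ℚ) * ((e:ℚ) - 1) = 0)
        rcases this with h | h
        exacts [Or.inl h, Or.inr (by linarith)]
      rcases h01 with h | h
      · exact Or.inl (Subtype.ext (by simpa using h))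
      · exact Or.inr (Subtype.ext (by simpa using h))
    rcases he01 with rfl | rfl
    · rw [sub_zero] at hu
      exact ZLoc_not_isUnit_left _ a hcast hpa hu
    · refine ZLoc_not_isUnit_right (((a : ℤ) : ↥(ZLoc p hp ⊓ ZLoc q hq)) - 1) (a - 1)
        ?_ hqa hu
      push_cast
      ring
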